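/- Let V = [v₁,…,v_m] be a polynomial matrix whose columns form a basis (over ℂ(z)) of a subspace 𝒱 of ℂ(z)^k, and suppose: (a) V(z₀) has full column rank for every z₀ ∈ ℂ, and (b) the highest column-degree coefficient matrix V_h has full column rank. Then for every polynomial vector ξ ∈ 𝒱 ∩ ℂ[z]^k, the unique ζ ∈ ℂ(z)^m with ξ = Vζ is a polynomial vector, and deg ξ = max_l (deg ζ_l + ν_l) where ν_l = deg v_l. -/

import Mathlib

open Matrix

noncomputable section

/-- Map a complex matrix entrywise to rational functions. -/
def mc {a b : ℕ} (M : Matrix (Fin a) (Fin b) ℂ) : Matrix (Fin a) (Fin b) (RatFunc ℂ) :=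
  M.map (⇑(RatFunc.C : ℂ →+* RatFunc ℂ))

/-- The resolvent `(z I − M)⁻¹` as a matrix of rational functions. -/
def res {a : ℕ} (M : Matrix (Fin a) (Fin a) ℂ) : Matrix (Fin a) (Fin a) (RatFunc ℂ) :=
  ((Matrix.scalar (Fin a) (RatFunc.X : RatFunc ℂ)) - mc M)⁻¹

/-- The "anti-resolvent" `(z I + M)⁻¹`, used for para-hermitian conjugates. -/
def resneg {a : ℕ} (M : Matrix (Fin a) (Fin a) ℂ) : Matrix (Fin a) (Fin a) (RatFunc ℂ) :=
  ((Matrix.scalar (Fin a) (RatFunc.X : RatFunc ℂ)) + mc M)⁻¹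

/-- Observability of a pair `(C, A)`. -/
def Observable {p n : ℕ} (C : Matrix (Fin p) (Fin n) ℂ) (A : Matrix (Fin n) (Fin n) ℂ) : Prop :=
  ∀ v : Fin n → ℂ, (∀ k : ℕ, C *ᵥ ((A ^ k) *ᵥ v) = 0) → v = 0

/-- Controllability of a pair `(Λ, G)`. -/
def Controllable {r m : ℕ} (L : Matrix (Fin r) (Fin r) ℂ) (G : Matrix (Fin r) (Fin m) ℂ) : Prop :=
  ∀ y : Fin r → ℂ, (∀ k : ℕ, y ᵥ* ((L ^ k) * G) = 0) → y = 0

/-- The range (column space) of a matrix, as a submodule of `ℂⁿ`. -/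
def mrange {a b : ℕ} (M : Matrix (Fin a) (Fin b) ℂ) : Submodule ℂ (Fin a → ℂ) :=
  LinearMap.range M.mulVecLin

/-- The set of states reachable from the origin by a finite input sequence
producing identically zero output along the way (the minimal input-containing
subspace `C*(Σ)`). -/
def OutNullReach {n p q : ℕ} (A : Matrix (Fin n) (Fin n) ℂ) (B : Matrix (Fin n) (Fin q) ℂ)
    (C : Matrix (Fin p) (Fin n) ℂ) (D : Matrix (Fin p) (Fin q) ℂ) (x : Fin n → ℂ) : Prop :=
  ∃ (j : ℕ) (ξ : ℕ → (Fin n → ℂ)) (u : ℕ → (Fin q → ℂ)),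
    ξ 0 = 0 ∧ (∀ i < j, ξ (i + 1) = A *ᵥ ξ i + B *ᵥ u i ∧ C *ᵥ ξ i + D *ᵥ u i = 0) ∧ ξ j = x

/-- Forney's criterion (iv) ⇒ (ii): if a polynomial basis matrix `V` has
full column rank at every point of `ℂ` and its highest column-degree coefficient matrix
has full column rank, then every polynomial vector in the span has polynomial coordinates,
with the expected degree formula. -/
theorem stmt19 {k m : ℕ}
    (V : Matrix (Fin k) (Fin m) (Polynomial ℂ))
    (hindep : ∀ ζ : Fin m → RatFunc ℂ,
      (V.map (algebraMap (Polynomial ℂ) (RatFunc ℂ))) *ᵥ ζ = 0 → ζ = 0)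
    (hpoint : ∀ (z₀ : ℂ) (c : Fin m → ℂ),
      (Matrix.of fun i l => (V i l).eval z₀) *ᵥ c = 0 → c = 0)
    (hhigh : ∀ c : Fin m → ℂ,
      (Matrix.of fun i l =>
        (V i l).coeff (Finset.univ.sup fun i' => (V i' l).natDegree)) *ᵥ c = 0 → c = 0) :
    ∀ (ξ : Fin k → Polynomial ℂ) (ζ : Fin m → RatFunc ℂ),
      (V.map (algebraMap (Polynomial ℂ) (RatFunc ℂ))) *ᵥ ζ
          = (fun i => algebraMap (Polynomial ℂ) (RatFunc ℂ) (ξ i)) →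
      ∃ ζp : Fin m → Polynomial ℂ,
        (∀ l, algebraMap (Polynomial ℂ) (RatFunc ℂ) (ζp l) = ζ l) ∧
        (Finset.univ.sup fun i => (ξ i).degree)
          = Finset.univ.sup fun l =>
              (ζp l).degree + ((Finset.univ.sup fun i' => (V i' l).natDegree : ℕ) : WithBot ℕ) := by
  
  intro ξ ζ hVζ
  classical
  set ν : Fin m → ℕ := fun l => Finset.univ.sup fun i' => (V i' l).natDegree with hν
  have inj : Function.Injective (algebraMap (Polynomial ℂ) (RatFunc ℂ)) :=
    IsFractionRing.injective _ _
  -- Key divisibility lemma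
  have key : ∀ n (q : Polynomial ℂ), q.natDegree = n → q ≠ 0 →
      ∀ p : Fin m → Polynomial ℂ, (∀ i, (∑ l, V i l * p l) = q * ξ i) → ∀ l, q ∣ p l := by
    intro n
    induction n using Nat.strong_induction_on with
    | _ n ih =>
      intro q hqn hq0 p hp l
      rcases Nat.eq_zero_or_pos n with h0 | hpos
      · subst h0
        obtain ⟨a, ha⟩ := Polynomial.natDegree_eq_zero.mp hqn
        have hu : IsUnit q := by
          rw [← ha]
          exact Polynomial.isUnit_C.mpr (isUnit_iff_ne_zero.mpr (by
            rintro rfl; exact hq0 (by rw [← ha, map_zero])))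
        exact hu.dvd
      · have hdeg : 0 < q.degree := Polynomial.natDegree_pos_iff_degree_pos.mp (hqn ▸ hpos)
        obtain ⟨z₀, hz₀⟩ := Complex.exists_root hdeg
        have hev : ∀ l', (p l').eval z₀ = 0 := by
          have h0 : (Matrix.of fun i l' => (V i l').eval z₀) *ᵥ (fun l' => (p l').eval z₀) = 0 := by
            funext i
            have := congrArg (Polynomial.eval z₀) (hp i)
            simp only [Polynomial.eval_finset_sum, Polynomial.eval_mul] at this
            simpa [Matrix.mulVec, dotProduct, hz₀.eq_zero] using this
          exact fun l' => congrFun (hpoint z₀ _ h0) l'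
        have hXne : (Polynomial.X - Polynomial.C z₀ : Polynomial ℂ) ≠ 0 :=
          Polynomial.X_sub_C_ne_zero z₀
        obtain ⟨q', hq'⟩ := (Polynomial.dvd_iff_isRoot.mpr hz₀)
        have hpdvd : ∀ l', ∃ p', p l' = (Polynomial.X - Polynomial.C z₀) * p' :=
          fun l' => Polynomial.dvd_iff_isRoot.mpr (hev l')
        choose p' hp' using hpdvd
        have hq'0 : q' ≠ 0 := by rintro rfl; exact hq0 (by rw [hq', mul_zero])
        have hdq' : q'.natDegree < n := by
          have := Polynomial.natDegree_mul hXne hq'0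
          rw [← hq', hqn, Polynomial.natDegree_X_sub_C] at this
          omega
        have hp2 : ∀ i, (∑ l', V i l' * p' l') = q' * ξ i := by
          intro i
          apply mul_left_cancel₀ hXne
          calc (Polynomial.X - Polynomial.C z₀) * ∑ l', V i l' * p' l'
              = ∑ l', V i l' * ((Polynomial.X - Polynomial.C z₀) * p' l') := by
                rw [Finset.mul_sum]; exact Finset.sum_congr rfl fun l' _ => by ring
            _ = ∑ l', V i l' * p l' := by
                exact Finset.sum_congr rfl fun l' _ => by rw [hp' l']
            _ = q * ξ i := hp i
            _ = (Polynomial.X - Polynomial.C z₀) * (q' * ξ i) := by rw [hq']; ring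
        have := ih q'.natDegree hdq' q' rfl hq'0 p' hp2 l
        rw [hq', hp' l]
        exact mul_dvd_mul_left _ this
  -- Clear denominators
  set q : Polynomial ℂ := ∏ l, (ζ l).denom with hqdef
  have hq0 : q ≠ 0 := Finset.prod_ne_zero_iff.mpr fun l _ => RatFunc.denom_ne_zero _
  have hdvdq : ∀ l, (ζ l).denom ∣ q := fun l => Finset.dvd_prod_of_mem _ (Finset.mem_univ l)
  have halgq : algebraMap (Polynomial ℂ) (RatFunc ℂ) q ≠ 0 := fun h => hq0 (inj (by simpa using h))
  choose r hr using hdvdq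
  set p : Fin m → Polynomial ℂ := fun l => (ζ l).num * r l with hpdef
  have halg : ∀ l, algebraMap (Polynomial ℂ) (RatFunc ℂ) (p l)
      = ζ l * algebraMap (Polynomial ℂ) (RatFunc ℂ) q := by
    intro l
    have hden : algebraMap (Polynomial ℂ) (RatFunc ℂ) (ζ l).denom ≠ 0 :=
      fun h => RatFunc.denom_ne_zero (ζ l) (inj (by simpa using h))
    have hnum : ζ l * algebraMap (Polynomial ℂ) (RatFunc ℂ) (ζ l).denom
        = algebraMap (Polynomial ℂ) (RatFunc ℂ) (ζ l).num := by
      have h := div_mul_cancel₀ (algebraMap (Polynomial ℂ) (RatFunc ℂ) (ζ l).num) hden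
      rwa [RatFunc.num_div_denom] at h
    rw [hpdef]
    simp only [_root_.map_mul]
    rw [hr l, _root_.map_mul, ← mul_assoc, hnum]
  have heq : ∀ i, (∑ l, V i l * p l) = q * ξ i := by
    intro i
    apply inj
    have hrow : (∑ l, algebraMap (Polynomial ℂ) (RatFunc ℂ) (V i l) * ζ l)
        = algebraMap (Polynomial ℂ) (RatFunc ℂ) (ξ i) := by
      have := congrFun hVζ i
      simpa [Matrix.mulVec, dotProduct, Matrix.map_apply] using this
    calc algebraMap (Polynomial ℂ) (RatFunc ℂ) (∑ l, V i l * p l)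
        = ∑ l, algebraMap (Polynomial ℂ) (RatFunc ℂ) (V i l)
            * (ζ l * algebraMap (Polynomial ℂ) (RatFunc ℂ) q) := by
          rw [map_sum]; exact Finset.sum_congr rfl fun l _ => by rw [_root_.map_mul, halg l]
      _ = (∑ l, algebraMap (Polynomial ℂ) (RatFunc ℂ) (V i l) * ζ l)
            * algebraMap (Polynomial ℂ) (RatFunc ℂ) q := by
          rw [Finset.sum_mul]; exact Finset.sum_congr rfl fun l _ => by ring
      _ = algebraMap (Polynomial ℂ) (RatFunc ℂ) (q * ξ i) := by
          rw [hrow, _root_.map_mul]; ring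
  have hdvd2 : ∀ l, q ∣ p l := key q.natDegree q rfl hq0 p heq
  choose ζp hζp using hdvd2
  have hal : ∀ l, algebraMap (Polynomial ℂ) (RatFunc ℂ) (ζp l) = ζ l := by
    intro l
    apply mul_right_cancel₀ halgq
    rw [← _root_.map_mul, mul_comm (ζp l) q, ← hζp l, halg l]
  have hmain : ∀ i, (∑ l, V i l * ζp l) = ξ i := by
    intro i
    apply mul_left_cancel₀ hq0
    calc q * ∑ l, V i l * ζp l = ∑ l, V i l * (q * ζp l) := by
          rw [Finset.mul_sum]; exact Finset.sum_congr rfl fun l _ => by ring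
      _ = ∑ l, V i l * p l := Finset.sum_congr rfl fun l _ => by rw [← hζp l]
      _ = q * ξ i := heq i
  refine ⟨ζp, hal, ?_⟩
  by_cases hz : ∀ l, ζp l = 0
  · have hξ0 : ∀ i, ξ i = 0 := fun i => by rw [← hmain i]; simp [hz]
    apply le_antisymm
    · exact Finset.sup_le fun i _ => by simp [hξ0 i]
    · exact Finset.sup_le fun l _ => by simp [hz l]
  · push_neg at hz
    obtain ⟨l₀, hl₀⟩ := hz
    have hSne : (Finset.univ.sup fun l => (ζp l).degree + (ν l : WithBot ℕ)) ≠ ⊥ := by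
      intro h
      have hle : (ζp l₀).degree + (ν l₀ : WithBot ℕ)
          ≤ Finset.univ.sup fun l => (ζp l).degree + (ν l : WithBot ℕ) :=
        Finset.le_sup (f := fun l => (ζp l).degree + (ν l : WithBot ℕ)) (Finset.mem_univ l₀)
      rw [h, le_bot_iff] at hle
      rw [Polynomial.degree_eq_natDegree hl₀] at hle
      exact absurd hle (by simp [← Nat.cast_add])
    obtain ⟨n, hn0⟩ := WithBot.ne_bot_iff_exists.mp hSne
    have hn : (n : WithBot ℕ) = Finset.univ.sup fun l => (ζp l).degree + (ν l : WithBot ℕ) := by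
      exact_mod_cast hn0
    have hupper : ∀ i, (ξ i).degree ≤ (n : WithBot ℕ) := by
      intro i
      rw [← hmain i]
      refine le_trans (Polynomial.degree_sum_le _ _) (Finset.sup_le fun l _ => ?_)
      calc ((V i l) * ζp l).degree ≤ (V i l).degree + (ζp l).degree :=
            Polynomial.degree_mul_le _ _
        _ ≤ (ν l : WithBot ℕ) + (ζp l).degree := by
            refine add_le_add_left ?_ _
            refine le_trans (Polynomial.degree_le_natDegree) ?_
            exact_mod_cast Finset.le_sup (f := fun i' => (V i' l).natDegree)
              (Finset.mem_univ i)
        _ = (ζp l).degree + (ν l : WithBot ℕ) := add_comm _ _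
        _ ≤ Finset.univ.sup fun l => (ζp l).degree + (ν l : WithBot ℕ) :=
            Finset.le_sup (f := fun l => (ζp l).degree + (ν l : WithBot ℕ)) (Finset.mem_univ l)
        _ = (n : WithBot ℕ) := hn.symm
    obtain ⟨l₁, -, hl₁⟩ := Finset.exists_mem_eq_sup Finset.univ ⟨l₀, Finset.mem_univ l₀⟩
      (fun l => (ζp l).degree + (ν l : WithBot ℕ))
    have hl₁n : (ζp l₁).degree + (ν l₁ : WithBot ℕ) = (n : WithBot ℕ) := by
      rw [← hl₁, ← hn]
    have hζl₁ : ζp l₁ ≠ 0 := by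
      intro h
      rw [h, Polynomial.degree_zero] at hl₁n
      exact absurd hl₁n (by simp)
    set c : Fin m → ℂ := fun l =>
      if (ζp l).degree + (ν l : WithBot ℕ) = (n : WithBot ℕ) then (ζp l).leadingCoeff else 0
      with hc
    have hcne : c ≠ 0 := by
      intro h
      have h2 := congrFun h l₁
      rw [hc] at h2
      simp only [hl₁n, if_pos rfl, Pi.zero_apply] at h2
      exact Polynomial.leadingCoeff_ne_zero.mpr hζl₁ h2
    have hcoeff : ∀ i, (ξ i).coeff n = ∑ l, (V i l).coeff (ν l) * c l := by
      intro i
      rw [← hmain i, Polynomial.finset_sum_coeff]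
      refine Finset.sum_congr rfl fun l _ => ?_
      by_cases h : (ζp l).degree + (ν l : WithBot ℕ) = (n : WithBot ℕ)
      · have hζ0 : ζp l ≠ 0 := by
          intro h0
          rw [h0, Polynomial.degree_zero] at h
          exact absurd h (by simp)
        have hd : (ζp l).natDegree + ν l = n := by
          rw [Polynomial.degree_eq_natDegree hζ0] at h
          exact_mod_cast h
        have hn' : n = ν l + (ζp l).natDegree := by omega
        rw [hn', Polynomial.coeff_mul_add_eq_of_natDegree_le
          (Finset.le_sup (f := fun i' => (V i' l).natDegree) (Finset.mem_univ i)) le_rfl]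
        rw [hc]
        simp only [if_pos h]
        rfl
      · have hle2 : (ζp l).degree + (ν l : WithBot ℕ) ≤ (n : WithBot ℕ) := by
          rw [hn]
          exact Finset.le_sup (f := fun l => (ζp l).degree + (ν l : WithBot ℕ))
            (Finset.mem_univ l)
        have h1 : (ζp l).degree + (ν l : WithBot ℕ) < (n : WithBot ℕ) :=
          lt_of_le_of_ne hle2 h
        have hlt : ((V i l) * ζp l).degree < (n : WithBot ℕ) := by
          refine lt_of_le_of_lt ?_ h1
          calc ((V i l) * ζp l).degree ≤ (V i l).degree + (ζp l).degree :=
                Polynomial.degree_mul_le _ _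
            _ ≤ (ν l : WithBot ℕ) + (ζp l).degree := by
                refine add_le_add_left ?_ _
                refine le_trans (Polynomial.degree_le_natDegree) ?_
                exact_mod_cast Finset.le_sup (f := fun i' => (V i' l).natDegree)
                  (Finset.mem_univ i)
            _ = (ζp l).degree + (ν l : WithBot ℕ) := add_comm _ _
        rw [Polynomial.coeff_eq_zero_of_degree_lt hlt, hc]
        simp only [if_neg h, mul_zero]
    have hVc : (Matrix.of fun i l => (V i l).coeff (ν l)) *ᵥ c ≠ 0 :=
      fun h => hcne (hhigh c h)
    obtain ⟨i, hi⟩ : ∃ i, ((Matrix.of fun i l => (V i l).coeff (ν l)) *ᵥ c) i ≠ 0 := by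
      by_contra h
      push_neg at h
      exact hVc (funext h)
    have hin : (ξ i).coeff n ≠ 0 := by
      rw [hcoeff i]
      simpa [Matrix.mulVec, dotProduct] using hi
    have hge : (n : WithBot ℕ) ≤ (ξ i).degree := Polynomial.le_degree_of_ne_zero hin
    rw [← hn]
    refine le_antisymm (Finset.sup_le fun i _ => hupper i) ?_
    exact le_trans hge (Finset.le_sup (f := fun i => (ξ i).degree) (Finset.mem_univ i))
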